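/- With the same data as the previous statement, det M_N = ((2N+1)²/(N+1)²)·∏_{i=0}^{N−1} (2N+4Ni−2i²+1)/(2N+1−i)². In particular det M_N > 0. -/

import Mathlib

/-- d_i = 2(i+1)/(2N−i) for i < N, d_N = 1. -/
noncomputable def dS (N i : ℕ) : ℝ :=
  if i = N then 1 else 2 * ((i : ℝ) + 1) / (2 * N - i)

/-- a_i = (i+1)/(2N−i) − i/(2N+1−i) for i < N, a_N = 1/(N+1). -/
noncomputable def aS (N i : ℕ) : ℝ :=
  if i = N then 1 / ((N : ℝ) + 1)
  else ((i : ℝ) + 1) / (2 * N - i) - (i : ℝ) / (2 * N + 1 - i)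

/-- The (k+1)×(k+1) leading principal submatrix: diagonal (d₀,…,d_k),
(i,j)-entry a_{max(i,j)} off the diagonal. -/
noncomputable def MmatS (N k : ℕ) : Matrix (Fin (k + 1)) (Fin (k + 1)) ℝ :=
  Matrix.of fun i j => if i = j then dS N i else aS N (max (i : ℕ) (j : ℕ))



open Matrix

noncomputable def DpS (N i : ℕ) : ℝ :=
  if i = N then 1
  else (2 * (N : ℝ) + 4 * N * i - 2 * (i : ℝ) ^ 2 + 1) / (2 * N - i) ^ 2

noncomputable def UmS (N : ℕ) : Matrix (Fin (N + 1)) (Fin (N + 1)) ℝ :=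
  Matrix.of fun i j =>
    if (i : ℕ) = (j : ℕ) then 1
    else if (i : ℕ) < (j : ℕ) then 1 / (2 * (N : ℝ) + 1 - (j : ℕ)) else 0

-- step identity (I2)
lemma step_id (N k : ℕ) (hN : 1 ≤ N) (hk : k < N) :
    DpS N (k+1) / (2 * (N:ℝ) + 1 - ((k+1 : ℕ) : ℝ)) ^ 2 + dS N (k+1) - DpS N (k+1)
      = dS N k - DpS N k := by
  have hkN : k ≠ N := Nat.ne_of_lt hk
  have hkR : (k : ℝ) < N := by exact_mod_cast hk
  have h1 : (2 * (N:ℝ) - k) ≠ 0 := by nlinarith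
  have h2 : (2 * (N:ℝ) - (k+1)) ≠ 0 ∨ k + 1 = N := by
    rcases Nat.lt_or_ge (k+1) N with h | h
    · left; have : ((k:ℝ)+1) < N := by exact_mod_cast h
      nlinarith
    · right; omega
  rcases Nat.lt_or_ge (k+1) N with h | h
  · have hne : k + 1 ≠ N := Nat.ne_of_lt h
    have hR : ((k:ℝ)+1) < N := by exact_mod_cast h
    have h3 : (2 * (N:ℝ) - ((k:ℕ)+1)) ≠ 0 := by nlinarith
    simp only [DpS, dS, if_neg hne, if_neg hkN]
    push_cast
    have h3' : (2 * (N:ℝ) + 1 - ((k:ℝ)+1)) ≠ 0 := by nlinarith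
    field_simp
    ring
  · have heq : k + 1 = N := by omega
    subst heq
    simp only [DpS, dS, if_pos rfl, if_neg hkN, ↓reduceIte]
    push_cast
    have h4 : ((k:ℝ) + 2) ≠ 0 := by positivity
    have h5 : 2*((k:ℝ)+1)-(k:ℝ) ≠ 0 := by nlinarith [Nat.cast_nonneg (α := ℝ) k]
    have h6 : 2*((k:ℝ)+1)+1-((k:ℝ)+1) ≠ 0 := by nlinarith [Nat.cast_nonneg (α := ℝ) k]
    field_simp
    ring

lemma sum_lemma (N : ℕ) (hN : 1 ≤ N) (t : ℕ) (ht : t ≤ N) :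
    ∑ m ∈ Finset.Icc (N - t + 1) N, DpS N m / (2 * (N:ℝ) + 1 - (m : ℝ)) ^ 2
      = dS N (N - t) - DpS N (N - t) := by
  induction t with
  | zero =>
    rw [Nat.sub_zero, Finset.Icc_eq_empty (by omega), Finset.sum_empty]
    simp [dS, DpS]
  | succ t ih =>
    have ht' : t ≤ N := Nat.le_of_succ_le ht
    have hset : Finset.Icc (N - (t+1) + 1) N = insert (N - t) (Finset.Icc (N - t + 1) N) := by
      ext x
      simp only [Finset.mem_Icc, Finset.mem_insert]
      omega
    rw [hset, Finset.sum_insert (by simp only [Finset.mem_Icc]; omega), ih ht']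
    have hk : N - (t+1) < N := by omega
    have hkk : N - (t+1) + 1 = N - t := by omega
    have hstep := step_id N (N - (t+1)) hN hk
    rw [hkk] at hstep
    linarith [hstep]

lemma sum_lemma' (N k : ℕ) (hN : 1 ≤ N) (hk : k ≤ N) :
    ∑ m ∈ Finset.Icc (k + 1) N, DpS N m / (2 * (N:ℝ) + 1 - (m : ℝ)) ^ 2
      = dS N k - DpS N k := by
  have h := sum_lemma N hN (N - k) (by omega)
  rwa [Nat.sub_sub_self hk] at h

lemma off_id (N j : ℕ) (hN : 1 ≤ N) (hj : j ≤ N) :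
    aS N j = DpS N j / (2 * (N:ℝ) + 1 - (j : ℝ)) + dS N j - DpS N j := by
  rcases Nat.lt_or_ge j N with h | h
  · have hne : j ≠ N := Nat.ne_of_lt h
    have hjR : (j : ℝ) < N := by exact_mod_cast h
    have h1 : (2 * (N:ℝ) - j) ≠ 0 := by nlinarith
    have h2 : (2 * (N:ℝ) + 1 - j) ≠ 0 := by nlinarith
    simp only [aS, dS, DpS, if_neg hne]
    field_simp
    ring
  · have heq : j = N := by omega
    subst heq
    rw [show aS j j = 1/((j:ℝ)+1) from if_pos rfl, show dS j j = 1 from if_pos rfl,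
      show DpS j j = 1 from if_pos rfl, show (2 * (j:ℝ) + 1 - j) = j + 1 from by ring]
    ring

lemma factor (N : ℕ) (hN : 1 ≤ N) :
    MmatS N N = UmS N * Matrix.diagonal (fun i : Fin (N+1) => DpS N (i : ℕ)) * (UmS N)ᵀ := by
  ext i j
  rw [Matrix.mul_assoc, Matrix.mul_apply]
  simp only [Matrix.diagonal_mul, Matrix.transpose_apply]
  set g : ℕ → ℝ := fun m =>
    (if (i:ℕ) = m then 1 else if (i:ℕ) < m then 1/(2*(N:ℝ)+1-(m:ℝ)) else 0) *
    (DpS N m *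
    (if (j:ℕ) = m then 1 else if (j:ℕ) < m then 1/(2*(N:ℝ)+1-(m:ℝ)) else 0)) with hg
  have hrw : ∀ m : Fin (N+1),
      UmS N i m * (DpS N (m:ℕ) * UmS N j m) = g (m : ℕ) := fun m => rfl
  rw [Finset.sum_congr rfl (fun m _ => hrw m), Fin.sum_univ_eq_sum_range g (N+1)]
  set k := max (i:ℕ) (j:ℕ) with hk
  have hiN : (i:ℕ) ≤ N := Nat.lt_succ_iff.mp i.isLt
  have hjN : (j:ℕ) ≤ N := Nat.lt_succ_iff.mp j.isLt
  have hki : (i:ℕ) ≤ k := hk ▸ le_max_left _ _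
  have hkj : (j:ℕ) ≤ k := hk ▸ le_max_right _ _
  have hkN : k ≤ N := hk ▸ max_le hiN hjN
  have hsub : insert k (Finset.Icc (k+1) N) ⊆ Finset.range (N+1) := by
    intro x hx
    simp only [Finset.mem_insert, Finset.mem_Icc] at hx
    simp only [Finset.mem_range]
    omega
  have hzero : ∀ x ∈ Finset.range (N+1), x ∉ insert k (Finset.Icc (k+1) N) → g x = 0 := by
    intro x hx hx'
    simp only [Finset.mem_range] at hx
    simp only [Finset.mem_insert, Finset.mem_Icc] at hx'
    have hxk : x < k := by omega
    rcases lt_max_iff.mp (hk ▸ hxk) with hi | hj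
    · simp only [hg]
      rw [if_neg (show ¬(i:ℕ) = x by omega), if_neg (show ¬(i:ℕ) < x by omega)]
      ring
    · simp only [hg]
      rw [if_neg (show ¬(j:ℕ) = x by omega), if_neg (show ¬(j:ℕ) < x by omega)]
      ring
  rw [← Finset.sum_subset hsub hzero,
    Finset.sum_insert (by simp only [Finset.mem_Icc]; omega)]
  have htail : ∑ m ∈ Finset.Icc (k+1) N, g m
      = ∑ m ∈ Finset.Icc (k+1) N, DpS N m / (2 * (N:ℝ) + 1 - (m : ℝ)) ^ 2 := by
    refine Finset.sum_congr rfl fun m hm => ?_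
    simp only [Finset.mem_Icc] at hm
    simp only [hg]
    rw [if_neg (show ¬(i:ℕ) = m by omega), if_pos (show (i:ℕ) < m by omega),
      if_neg (show ¬(j:ℕ) = m by omega), if_pos (show (j:ℕ) < m by omega),
      div_eq_mul_inv (DpS N m), pow_two, mul_inv]
    ring
  rw [htail, sum_lemma' N k hN hkN]
  by_cases hij : i = j
  · subst hij
    have hkk : k = (i:ℕ) := by rw [hk, max_self]
    rw [hkk]
    simp only [MmatS, Matrix.of_apply, hg, eq_self_iff_true, if_true]
    ring
  · have hijn : (i:ℕ) ≠ (j:ℕ) := fun h => hij (Fin.ext h)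
    rcases Nat.lt_or_ge (i:ℕ) (j:ℕ) with hlt | hge
    · have hmax : (i:ℕ) ⊔ (j:ℕ) = (j:ℕ) := max_eq_right (le_of_lt hlt)
      have hkk : k = (j:ℕ) := by rw [hk, hmax]
      rw [hkk]
      simp only [MmatS, Matrix.of_apply, if_neg hij, hmax, hg, if_neg hijn, if_pos hlt,
        eq_self_iff_true, if_true]
      rw [off_id N (j:ℕ) hN hjN]
      ring
    · have hlt : (j:ℕ) < (i:ℕ) := by omega
      have hmax : (i:ℕ) ⊔ (j:ℕ) = (i:ℕ) := max_eq_left (le_of_lt hlt)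
      have hkk : k = (i:ℕ) := by rw [hk, hmax]
      rw [hkk]
      simp only [MmatS, Matrix.of_apply, if_neg hij, hmax, hg,
        if_neg (show ¬(j:ℕ) = (i:ℕ) from fun h => hijn h.symm), if_pos hlt,
        eq_self_iff_true, if_true]
      rw [off_id N (i:ℕ) hN hiN]
      ring

lemma prod_id (N : ℕ) (hN : 1 ≤ N) : ∀ n, n ≤ N →
    ∏ i ∈ Finset.range n, DpS N i
      = ((2*(N:ℝ)+1)/(2*(N:ℝ)+1-(n:ℝ)))^2 *
        ∏ i ∈ Finset.range n,
          (2 * (N : ℝ) + 4 * N * i - 2 * (i : ℝ) ^ 2 + 1) / (2 * N + 1 - i) ^ 2 := by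
  intro n hn
  induction n with
  | zero =>
    simp only [Finset.prod_range_zero, Nat.cast_zero, sub_zero, mul_one]
    rw [div_self (by positivity), one_pow]
  | succ n ih =>
    have hn' : n ≤ N := Nat.le_of_succ_le hn
    have hnN : n < N := hn
    have hnR : (n:ℝ) < N := by exact_mod_cast hnN
    have hn0 : (0:ℝ) ≤ n := Nat.cast_nonneg n
    have hc : (2*(N:ℝ)+1-(n:ℝ)) ≠ 0 := by nlinarith
    have hd : (2*(N:ℝ)-(n:ℝ)) ≠ 0 := by nlinarith
    rw [Finset.prod_range_succ, Finset.prod_range_succ, ih hn']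
    rw [show DpS N n = (2 * (N : ℝ) + 4 * N * n - 2 * (n : ℝ) ^ 2 + 1) / (2 * N - n) ^ 2
      from if_neg (Nat.ne_of_lt hnN)]
    push_cast
    have hc' : (2*(N:ℝ)+1-((n:ℝ)+1)) ≠ 0 := by nlinarith
    field_simp
    ring

theorem det_MN_closed_form (N : ℕ) (hN : 1 ≤ N) :
    (MmatS N N).det =
      ((2 * (N : ℝ) + 1) ^ 2 / ((N : ℝ) + 1) ^ 2) *
      ∏ i ∈ Finset.range N,
          (2 * (N : ℝ) + 4 * N * i - 2 * (i : ℝ) ^ 2 + 1) / (2 * N + 1 - i) ^ 2 ∧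
    0 < (MmatS N N).det := by
  have hU : (UmS N).det = 1 := by
    rw [Matrix.det_of_upperTriangular (by
      intro a b hab
      have hba : (b:ℕ) < (a:ℕ) := hab
      simp only [UmS, Matrix.of_apply]
      rw [if_neg (by omega : ¬(a:ℕ) = (b:ℕ)), if_neg (by omega : ¬(a:ℕ) < (b:ℕ))])]
    simp [UmS]
  have hdet : (MmatS N N).det
      = ((2 * (N : ℝ) + 1) ^ 2 / ((N : ℝ) + 1) ^ 2) *
        ∏ i ∈ Finset.range N,
          (2 * (N : ℝ) + 4 * N * i - 2 * (i : ℝ) ^ 2 + 1) / (2 * N + 1 - i) ^ 2 := by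
    rw [factor N hN, Matrix.det_mul, Matrix.det_mul, Matrix.det_transpose, hU,
      Matrix.det_diagonal, one_mul, mul_one]
    rw [Fin.prod_univ_eq_prod_range (fun m => DpS N m) (N+1), Finset.prod_range_succ,
      show DpS N N = 1 from if_pos rfl, mul_one, prod_id N hN N le_rfl]
    congr 1
    rw [show (2*(N:ℝ)+1-(N:ℝ)) = (N:ℝ)+1 by ring, div_pow]
  refine ⟨hdet, ?_⟩
  rw [hdet]
  apply mul_pos
  · apply div_pos <;> positivity
  · apply Finset.prod_pos
    intro i hi
    simp only [Finset.mem_range] at hi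
    have hiR : (i:ℝ) < N := by exact_mod_cast hi
    have hi0 : (0:ℝ) ≤ i := Nat.cast_nonneg i
    apply div_pos
    · nlinarith [mul_nonneg hi0 (sub_nonneg.mpr hiR.le)]
    · have : (0:ℝ) < 2 * N + 1 - i := by nlinarith
      positivity
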